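/- Assume (H), let k ≥ κ and c₁ > c₂ > 0. For i = 1, 2, let φᵢ be a sharp local wave profile with speed cᵢ and ceiling k on (−∞, ξ₀ⁱ), satisfying the edge asymptotics φᵢ(ξ)·ξ^{−1/(m−1)} → ((m−1)cᵢ/m)^{1/(m−1)} as ξ → 0⁺, with maximal existence interval, and let (0, ξ̂ᵢ) ⊆ (0, ξ₀ⁱ) be the maximal interval on which φᵢ is strictly increasing. Then φ₁(ξ) > φ₂(ξ) for all ξ ∈ (0, min{ξ̂₁, ξ̂₂}). (Monotone dependence of the profiles on the speed c.) -/

import Mathlib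

open Real Filter Set MeasureTheory

/-- Standing hypotheses (H): degenerate Fisher-KPP data. -/
structure FisherData where
  m : ℝ
  r : ℝ
  d : ℝ → ℝ
  b : ℝ → ℝ
  κ : ℝ
  hm : 1 < m
  hr : 0 ≤ r
  hd_smooth : ContDiffOn ℝ 2 d (Set.Ici 0)
  hb_smooth : ContDiffOn ℝ 2 b (Set.Ici 0)
  hd0 : d 0 = 0
  hb0 : b 0 = 0
  hκ : 0 < κ
  heq : d κ = b κ
  hsign : ∀ s : ℝ, 0 < s → s ≠ κ → (b s - d s) * (s - κ) < 0
  hbd0 : derivWithin d (Set.Ici 0) 0 < derivWithin b (Set.Ici 0) 0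
  hd0' : 0 ≤ derivWithin d (Set.Ici 0) 0
  hd' : ∀ s : ℝ, 0 ≤ s → 0 ≤ derivWithin d (Set.Ici 0) s
  hb' : ∀ s : ℝ, 0 ≤ s → 0 ≤ derivWithin b (Set.Ici 0) s

namespace FisherData

variable (D : FisherData)

lemma m_pos : 0 < D.m := lt_trans one_pos D.hm

lemma m1_pos : 0 < D.m - 1 := sub_pos.2 D.hm

/-- Auxiliary: monotonicity on `Ici 0` of a `C²` function with nonneg derivative. -/
private lemma mono_aux {f : ℝ → ℝ} (hf : ContDiffOn ℝ 2 f (Set.Ici 0))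
    (hf' : ∀ s : ℝ, 0 ≤ s → 0 ≤ derivWithin f (Set.Ici 0) s) :
    MonotoneOn f (Set.Ici 0) := by
  have hdiff : DifferentiableOn ℝ f (Set.Ici 0) := hf.differentiableOn (by norm_num)
  apply monotoneOn_of_deriv_nonneg (convex_Ici 0) hf.continuousOn
  · intro x hx
    rw [interior_Ici] at hx
    exact ((hdiff x (Set.mem_Ici.2 (le_of_lt hx))).differentiableAt
      (Ici_mem_nhds hx)).differentiableWithinAt
  · intro x hx
    rw [interior_Ici] at hx
    have h1 : derivWithin f (Set.Ici 0) x = deriv f x :=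
      derivWithin_of_mem_nhds (Ici_mem_nhds hx)
    rw [← h1]
    exact hf' x (le_of_lt hx)

lemma d_mono : MonotoneOn D.d (Set.Ici 0) := mono_aux D.hd_smooth D.hd'

lemma b_mono : MonotoneOn D.b (Set.Ici 0) := mono_aux D.hb_smooth D.hb'

lemma d_nonneg {s : ℝ} (hs : 0 ≤ s) : 0 ≤ D.d s := by
  have := D.d_mono (Set.mem_Ici.2 (le_refl (0:ℝ))) hs hs
  rwa [D.hd0] at this

lemma b_nonneg {s : ℝ} (hs : 0 ≤ s) : 0 ≤ D.b s := by
  have := D.b_mono (Set.mem_Ici.2 (le_refl (0:ℝ))) hs hs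
  rwa [D.hb0] at this

lemma d_cont : ContinuousOn D.d (Set.Ici 0) := D.hd_smooth.continuousOn
lemma b_cont : ContinuousOn D.b (Set.Ici 0) := D.hb_smooth.continuousOn

private lemma lin_aux {f : ℝ → ℝ} (hf : ContDiffOn ℝ 2 f (Set.Ici 0)) (hf0 : f 0 = 0)
    (S : ℝ) : ∃ K : ℝ, 0 ≤ K ∧ ∀ t ∈ Set.Icc (0:ℝ) S, f t ≤ K * t := by
  have hdiff : DifferentiableOn ℝ f (Set.Ici 0) := hf.differentiableOn (by norm_num)
  have hcont : ContinuousOn (derivWithin f (Set.Ici 0)) (Set.Ici 0) :=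
    hf.continuousOn_derivWithin (uniqueDiffOn_Ici 0) (by norm_num)
  obtain ⟨C, hC⟩ := (isCompact_Icc (a := (0:ℝ)) (b := S)).exists_bound_of_continuousOn
    (hcont.mono (Icc_subset_Ici_self))
  refine ⟨max C 0, le_max_right _ _, fun t ht => ?_⟩
  have hd : ∀ x ∈ Set.Icc (0:ℝ) S, HasDerivWithinAt f (derivWithin f (Set.Ici 0) x)
      (Set.Icc (0:ℝ) S) x := fun x hx =>
    ((hdiff x hx.1).hasDerivWithinAt).mono Icc_subset_Ici_self
  have hb : ∀ x ∈ Set.Icc (0:ℝ) S, ‖derivWithin f (Set.Ici 0) x‖ ≤ max C 0 := fun x hx =>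
    le_trans (hC x hx) (le_max_left _ _)
  have := Convex.norm_image_sub_le_of_norm_hasDerivWithin_le hd hb (convex_Icc 0 S)
    (Set.left_mem_Icc.2 (le_trans ht.1 ht.2)) ht
  rw [hf0, sub_zero, sub_zero, Real.norm_eq_abs, Real.norm_eq_abs,
    abs_of_nonneg ht.1] at this
  exact le_trans (le_abs_self _) this

lemma linbound (S : ℝ) : ∃ K : ℝ, 0 ≤ K ∧
    ∀ t ∈ Set.Icc (0:ℝ) S, D.d t + D.b t ≤ K * t := by
  obtain ⟨K1, hK1, h1⟩ := lin_aux D.hd_smooth D.hd0 S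
  obtain ⟨K2, hK2, h2⟩ := lin_aux D.hb_smooth D.hb0 S
  exact ⟨K1 + K2, by linarith, fun t ht => by
    have := h1 t ht; have := h2 t ht; nlinarith⟩

end FisherData
/-- The function `φ^m` (real power). -/
noncomputable def phiPow (m : ℝ) (φ : ℝ → ℝ) : ℝ → ℝ := fun ξ => φ ξ ^ m

/-- A sharp local wave profile with speed `c` and ceiling `k` on `(-∞, ξ₀)`
(`ξ₀ ∈ (0, +∞]` as an extended real). -/
def IsSharpLocalProfile (D : FisherData) (c k : ℝ) (ξ₀ : EReal) (φ : ℝ → ℝ) : Prop :=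
  0 < ξ₀ ∧ Continuous φ ∧
  (∀ ξ : ℝ, ξ ≤ 0 → φ ξ = 0) ∧
  (∀ ξ : ℝ, 0 < ξ → (ξ : EReal) < ξ₀ → φ ξ ∈ Set.Ioo 0 k) ∧
  (∀ ξ : ℝ, 0 < ξ → (ξ : EReal) < ξ₀ → DifferentiableAt ℝ φ ξ) ∧
  (∀ ξ : ℝ, 0 < ξ → (ξ : EReal) < ξ₀ → DifferentiableAt ℝ (phiPow D.m φ) ξ) ∧
  (∀ ξ : ℝ, 0 < ξ → (ξ : EReal) < ξ₀ → DifferentiableAt ℝ (deriv (phiPow D.m φ)) ξ) ∧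
  Filter.Tendsto (deriv (phiPow D.m φ)) (nhdsWithin 0 (Set.Ioi 0)) (nhds 0) ∧
  (∀ ξ : ℝ, 0 < ξ → (ξ : EReal) < ξ₀ →
    c * deriv φ ξ = deriv (deriv (phiPow D.m φ)) ξ - D.d (φ ξ) + D.b (φ (ξ - c * D.r)))

/-- Edge asymptotics `φ(ξ)·ξ^{-1/(m-1)} → ((m-1)c/m)^{1/(m-1)}` as `ξ → 0⁺`. -/
def EdgeAsymp (m c : ℝ) (φ : ℝ → ℝ) : Prop :=
  Filter.Tendsto (fun ξ : ℝ => φ ξ * ξ ^ (-(1 / (m - 1))))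
    (nhdsWithin 0 (Set.Ioi 0)) (nhds (((m - 1) * c / m) ^ (1 / (m - 1))))

/-- The filter of real numbers tending to `ξ₀ ∈ (0, +∞]` from the left
(equal to `atTop` when `ξ₀ = ⊤`). -/
noncomputable def edgeFilter (ξ₀ : EReal) : Filter ℝ :=
  Filter.comap (fun x : ℝ => (x : EReal)) (nhdsWithin ξ₀ (Set.Iio ξ₀))

/-- A bundle of facts about a profile on the interval `(0, X]`. -/
structure Prof (D : FisherData) (c : ℝ) (φ : ℝ → ℝ) (X : ℝ) : Prop where
  hc : 0 < c
  hX : 0 < X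
  cont : Continuous φ
  zero : ∀ ξ : ℝ, ξ ≤ 0 → φ ξ = 0
  pos : ∀ ξ ∈ Set.Ioc (0:ℝ) X, 0 < φ ξ
  mono : StrictMonoOn φ (Set.Ioc (0:ℝ) X)
  diff : ∀ ξ ∈ Set.Ioc (0:ℝ) X, DifferentiableAt ℝ φ ξ
  diffm : ∀ ξ ∈ Set.Ioc (0:ℝ) X, DifferentiableAt ℝ (phiPow D.m φ) ξ
  diffm2 : ∀ ξ ∈ Set.Ioc (0:ℝ) X, DifferentiableAt ℝ (deriv (phiPow D.m φ)) ξ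
  lim0 : Filter.Tendsto (deriv (phiPow D.m φ)) (nhdsWithin 0 (Set.Ioi 0)) (nhds 0)
  ode : ∀ ξ ∈ Set.Ioc (0:ℝ) X, c * deriv φ ξ =
    deriv (deriv (phiPow D.m φ)) ξ - D.d (φ ξ) + D.b (φ (ξ - c * D.r))

open Classical in
/-- Inverse of the profile on `(0, X]`, with junk value 0 elsewhere. -/
noncomputable def invFn (φ : ℝ → ℝ) (X : ℝ) : ℝ → ℝ := fun s =>
  if h : ∃ x, x ∈ Set.Ioc (0:ℝ) X ∧ φ x = s then h.choose else 0

namespace Prof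

variable {D : FisherData} {c : ℝ} {φ : ℝ → ℝ} {X : ℝ} (P : Prof D c φ X)

include P

lemma Spos : 0 < φ X := P.pos X ⟨P.hX, le_refl X⟩

lemma nonneg {ξ : ℝ} (hξ : ξ ≤ X) : 0 ≤ φ ξ := by
  rcases le_or_gt ξ 0 with h | h
  · rw [P.zero ξ h]
  · exact le_of_lt (P.pos ξ ⟨h, hξ⟩)

lemma mono' {x y : ℝ} (hxy : x ≤ y) (hy : y ≤ X) : φ x ≤ φ y := by
  rcases le_or_gt x 0 with h | h
  · rw [P.zero x h]; exact P.nonneg hy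
  · rcases eq_or_lt_of_le hxy with rfl | hlt
    · exact le_refl _
    · exact le_of_lt (P.mono ⟨h, le_trans hxy hy⟩ ⟨lt_trans h hlt, hy⟩ hlt)

lemma inv_spec {s : ℝ} (hs : s ∈ Set.Ioc 0 (φ X)) :
    invFn φ X s ∈ Set.Ioc (0:ℝ) X ∧ φ (invFn φ X s) = s := by
  have hex : ∃ x, x ∈ Set.Ioc (0:ℝ) X ∧ φ x = s := by
    have him : s ∈ φ '' Set.Icc 0 X := by
      apply intermediate_value_Icc (le_of_lt P.hX) P.cont.continuousOn
      constructor
      · rw [P.zero 0 (le_refl 0)]; exact le_of_lt hs.1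
      · exact hs.2
    obtain ⟨x, hx, hfx⟩ := him
    refine ⟨x, ⟨?_, hx.2⟩, hfx⟩
    rcases eq_or_lt_of_le hx.1 with rfl | h
    · exfalso; rw [P.zero 0 (le_refl 0)] at hfx; exact absurd hfx.symm (ne_of_gt hs.1)
    · exact h
  rw [invFn, dif_pos hex]
  exact hex.choose_spec

attribute [irreducible] invFn

lemma inv_mem {s : ℝ} (hs : s ∈ Set.Ioc 0 (φ X)) : invFn φ X s ∈ Set.Ioc (0:ℝ) X :=
  (P.inv_spec hs).1

lemma phi_inv {s : ℝ} (hs : s ∈ Set.Ioc 0 (φ X)) : φ (invFn φ X s) = s :=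
  (P.inv_spec hs).2

lemma inv_phi {x : ℝ} (hx : x ∈ Set.Ioc (0:ℝ) X) : invFn φ X (φ x) = x := by
  have hs : φ x ∈ Set.Ioc 0 (φ X) := ⟨P.pos x hx, P.mono' hx.2 (le_refl X)⟩
  exact P.mono.injOn (P.inv_mem hs) hx (P.phi_inv hs)

lemma inv_lt_inv {s t : ℝ} (hs : s ∈ Set.Ioc 0 (φ X)) (ht : t ∈ Set.Ioc 0 (φ X))
    (hst : s < t) : invFn φ X s < invFn φ X t := by
  by_contra h
  push_neg at h
  have := P.mono' h (P.inv_mem hs).2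
  rw [P.phi_inv hs, P.phi_inv ht] at this
  exact absurd hst (not_lt.2 this)

lemma inv_le_inv {s t : ℝ} (hs : s ∈ Set.Ioc 0 (φ X)) (ht : t ∈ Set.Ioc 0 (φ X))
    (hst : s ≤ t) : invFn φ X s ≤ invFn φ X t := by
  rcases eq_or_lt_of_le hst with rfl | h
  · exact le_refl _
  · exact le_of_lt (P.inv_lt_inv hs ht h)

lemma inv_strictMono : StrictMonoOn (invFn φ X) (Set.Ioc 0 (φ X)) :=
  fun s hs t ht hst => P.inv_lt_inv hs ht hst

lemma inv_X : invFn φ X (φ X) = X := P.inv_phi ⟨P.hX, le_refl X⟩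

lemma inv_small {ε : ℝ} (hε : 0 < ε) : ∃ δ > 0, ∀ s ∈ Set.Ioc 0 (φ X),
    s < δ → invFn φ X s < ε := by
  set x₀ : ℝ := min (ε / 2) X with hx₀
  have hx₀mem : x₀ ∈ Set.Ioc (0:ℝ) X := ⟨lt_min (by linarith) P.hX, min_le_right _ _⟩
  refine ⟨φ x₀, P.pos x₀ hx₀mem, fun s hs hsδ => ?_⟩
  have h1 : invFn φ X s < x₀ := by
    by_contra h
    push_neg at h
    have := P.mono' h (P.inv_mem hs).2
    rw [P.phi_inv hs] at this
    exact absurd hsδ (not_lt.2 this)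
  calc invFn φ X s < x₀ := h1
    _ ≤ ε / 2 := min_le_left _ _
    _ < ε := by linarith

/-- Continuity of the inverse on `(0, φ X]`. -/
lemma inv_cont : ContinuousOn (invFn φ X) (Set.Ioc 0 (φ X)) := by
  intro a ha
  have hfa_mem := P.inv_mem ha
  have hfs_l : ∀ b < invFn φ X a, ∃ z ∈ Set.Ioc 0 (φ X),
      invFn φ X z ∈ Set.Ico b (invFn φ X a) := by
    intro b hb
    set x : ℝ := max b (invFn φ X a / 2) with hx
    have hx1 : 0 < x := lt_of_lt_of_le (half_pos hfa_mem.1) (le_max_right _ _)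
    have hx2 : x < invFn φ X a := max_lt hb (by linarith [hfa_mem.1])
    have hxm : x ∈ Set.Ioc (0:ℝ) X := ⟨hx1, le_trans (le_of_lt hx2) hfa_mem.2⟩
    refine ⟨φ x, ⟨P.pos x hxm, P.mono' hxm.2 (le_refl X)⟩, ?_⟩
    rw [P.inv_phi hxm]
    exact ⟨le_max_left _ _, hx2⟩
  rcases eq_or_lt_of_le ha.2 with haX | haX
  · -- endpoint `a = φ X`: left continuity suffices
    have h1 : ContinuousWithinAt (invFn φ X) (Set.Iic a) a :=
      P.inv_strictMono.continuousWithinAt_left_of_exists_between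
        (Ioc_mem_nhdsLE_of_mem (by rw [haX]; exact ⟨P.Spos, le_refl _⟩)) hfs_l
    exact h1.mono (fun z hz => by rw [mem_Iic, haX]; exact hz.2)
  · -- interior point
    have hinvlt : invFn φ X a < X := by
      have := P.inv_lt_inv ha ⟨P.Spos, le_refl _⟩ haX
      rwa [P.inv_X] at this
    have hfs_r : ∀ b > invFn φ X a, ∃ z ∈ Set.Ioc 0 (φ X),
        invFn φ X z ∈ Set.Ioc (invFn φ X a) b := by
      intro b hb
      set x : ℝ := min b ((invFn φ X a + X) / 2) with hx
      have hx1 : invFn φ X a < x := lt_min hb (by linarith)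
      have hx2 : x ≤ X := le_trans (min_le_right _ _) (by linarith)
      have hxm : x ∈ Set.Ioc (0:ℝ) X := ⟨lt_trans hfa_mem.1 hx1, hx2⟩
      refine ⟨φ x, ⟨P.pos x hxm, P.mono' hxm.2 (le_refl X)⟩, ?_⟩
      rw [P.inv_phi hxm]
      exact ⟨hx1, min_le_left _ _⟩
    have : ContinuousAt (invFn φ X) a :=
      P.inv_strictMono.continuousAt_of_exists_between
        (Ioc_mem_nhds ha.1 haX) hfs_l hfs_r
    exact this.continuousWithinAt

end Prof
/-- The reaction term along the profile. -/
noncomputable def Afun (D : FisherData) (c : ℝ) (φ : ℝ → ℝ) : ℝ → ℝ := fun t =>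
  D.d (φ t) - D.b (φ (t - c * D.r))

/-- The phase-plane integrand. -/
noncomputable def Gfun (D : FisherData) (c : ℝ) (φ : ℝ → ℝ) (X : ℝ) : ℝ → ℝ := fun t =>
  c * deriv (phiPow D.m φ) (invFn φ X t) +
    D.m * t ^ (D.m - 1) * (D.d t - D.b (φ (invFn φ X t - c * D.r)))

namespace Prof

variable {D : FisherData} {c : ℝ} {φ : ℝ → ℝ} {X : ℝ} (P : Prof D c φ X)

include P

lemma chain {ξ : ℝ} (hξ : ξ ∈ Set.Ioc (0:ℝ) X) :
    HasDerivAt (phiPow D.m φ) (D.m * φ ξ ^ (D.m - 1) * deriv φ ξ) ξ := by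
  have h1 : HasDerivAt (fun y : ℝ => y ^ D.m) (D.m * φ ξ ^ (D.m - 1)) (φ ξ) :=
    Real.hasDerivAt_rpow_const (Or.inl (ne_of_gt (P.pos ξ hξ)))
  exact h1.comp ξ (P.diff ξ hξ).hasDerivAt

lemma derivm_eq {ξ : ℝ} (hξ : ξ ∈ Set.Ioc (0:ℝ) X) :
    deriv (phiPow D.m φ) ξ = D.m * φ ξ ^ (D.m - 1) * deriv φ ξ := (P.chain hξ).deriv

lemma derivphi_eq {ξ : ℝ} (hξ : ξ ∈ Set.Ioc (0:ℝ) X) :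
    deriv φ ξ = deriv (phiPow D.m φ) ξ / (D.m * φ ξ ^ (D.m - 1)) := by
  have hpos : 0 < D.m * φ ξ ^ (D.m - 1) :=
    mul_pos D.m_pos (Real.rpow_pos_of_pos (P.pos ξ hξ) _)
  rw [P.derivm_eq hξ]
  exact (mul_div_cancel_left₀ _ (ne_of_gt hpos)).symm

lemma derivphi_nonneg {ξ : ℝ} (hξ : ξ ∈ Set.Ioc (0:ℝ) X) : 0 ≤ deriv φ ξ := by
  have h := (P.diff ξ hξ).hasDerivAt
  rw [hasDerivAt_iff_tendsto_slope] at h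
  have h2 : Filter.Tendsto (slope φ ξ) (nhdsWithin ξ (Set.Iio ξ)) (nhds (deriv φ ξ)) :=
    h.mono_left (nhdsWithin_mono ξ (fun y (hy : y ∈ Set.Iio ξ) => ne_of_lt hy))
  apply ge_of_tendsto h2
  filter_upwards [Ioo_mem_nhdsLT_of_mem (Set.mem_Ioc.2 ⟨hξ.1, le_refl ξ⟩)] with y hy
  have hle : φ y ≤ φ ξ := P.mono' (le_of_lt hy.2) hξ.2
  have : y - ξ < 0 := by linarith [hy.2]
  rw [slope_def_field]
  exact div_nonneg_of_nonpos (by linarith) (by linarith)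

lemma derivm_nonneg {ξ : ℝ} (hξ : ξ ∈ Set.Ioc (0:ℝ) X) :
    0 ≤ deriv (phiPow D.m φ) ξ := by
  rw [P.derivm_eq hξ]
  exact mul_nonneg (mul_pos D.m_pos (Real.rpow_pos_of_pos (P.pos ξ hξ) _)).le
    (P.derivphi_nonneg hξ)

lemma derivm_cont : ContinuousOn (deriv (phiPow D.m φ)) (Set.Ioc (0:ℝ) X) :=
  fun ξ hξ => ((P.diffm2 ξ hξ).continuousAt).continuousWithinAt

lemma derivphi_cont : ContinuousOn (deriv φ) (Set.Ioc (0:ℝ) X) := by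
  have h : ContinuousOn (fun ξ => deriv (phiPow D.m φ) ξ / (D.m * φ ξ ^ (D.m - 1)))
      (Set.Ioc (0:ℝ) X) := by
    apply P.derivm_cont.div
    · exact continuousOn_const.mul
        ((P.cont.continuousOn).rpow_const (fun x _ => Or.inr (le_of_lt D.m1_pos)))
    · intro x hx
      exact ne_of_gt (mul_pos D.m_pos (Real.rpow_pos_of_pos (P.pos x hx) _))
  exact h.congr (fun ξ hξ => P.derivphi_eq hξ)

lemma A_cont : ContinuousOn (Afun D c φ) (Set.Iic X) := by
  have hcr : 0 ≤ c * D.r := mul_nonneg P.hc.le D.hr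
  apply ContinuousOn.sub
  · exact D.d_cont.comp P.cont.continuousOn (fun t ht => P.nonneg ht)
  · apply D.b_cont.comp ((P.cont.comp (continuous_id.sub continuous_const)).continuousOn)
    intro t ht
    exact P.nonneg (by simp only [Set.mem_Iic] at ht ⊢; dsimp; linarith)

lemma A_bound : ∃ CA : ℝ, 0 ≤ CA ∧ ∀ t ∈ Set.Icc (0:ℝ) X, |Afun D c φ t| ≤ CA := by
  obtain ⟨CA, hCA⟩ := (isCompact_Icc (a := (0:ℝ)) (b := X)).exists_bound_of_continuousOn
    (P.A_cont.mono (fun t ht => ht.2))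
  refine ⟨max CA 0, le_max_right _ _, fun t ht => le_trans (hCA t ht) (le_max_left _ _)⟩

lemma ftc1 {ξ : ℝ} (hξ : ξ ∈ Set.Ioc (0:ℝ) X) :
    deriv (phiPow D.m φ) ξ = c * φ ξ + ∫ t in (0:ℝ)..ξ, Afun D c φ t := by
  have hAii : ∀ a b : ℝ, a ∈ Set.Icc (0:ℝ) X → b ∈ Set.Icc (0:ℝ) X →
      IntervalIntegrable (Afun D c φ) volume a b := by
    intro a b ha hb
    apply ContinuousOn.intervalIntegrable
    apply P.A_cont.mono
    intro t ht
    rcases le_total a b with hab | hab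
    · rw [Set.uIcc_of_le hab] at ht; exact le_trans ht.2 hb.2
    · rw [Set.uIcc_of_ge hab] at ht; exact le_trans ht.2 ha.2
  have key : ∀ ε ∈ Set.Ioo (0:ℝ) ξ, deriv (phiPow D.m φ) ξ =
      deriv (phiPow D.m φ) ε + c * (φ ξ - φ ε) +
        ((∫ t in (0:ℝ)..ξ, Afun D c φ t) - ∫ t in (0:ℝ)..ε, Afun D c φ t) := by
    intro ε hε
    have hεX : ε ∈ Set.Ioc (0:ℝ) X := ⟨hε.1, le_trans hε.2.le hξ.2⟩
    have hsub : Set.uIcc ε ξ ⊆ Set.Ioc (0:ℝ) X := by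
      rw [Set.uIcc_of_le hε.2.le]
      exact fun t ht => ⟨lt_of_lt_of_le hε.1 ht.1, le_trans ht.2 hξ.2⟩
    have h1 : ∫ t in ε..ξ, (c * deriv φ t + Afun D c φ t) =
        deriv (phiPow D.m φ) ξ - deriv (phiPow D.m φ) ε := by
      apply intervalIntegral.integral_eq_sub_of_hasDerivAt
      · intro t ht
        have htm : t ∈ Set.Ioc (0:ℝ) X := hsub ht
        have hval : deriv (deriv (phiPow D.m φ)) t = c * deriv φ t + Afun D c φ t := by
          have := P.ode t htm
          unfold Afun
          linarith
        have h := (P.diffm2 t htm).hasDerivAt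
        rwa [hval] at h
      · exact ((continuousOn_const.mul (P.derivphi_cont.mono hsub)).add
          ((P.A_cont.mono (fun t ht => (hsub ht).2)))).intervalIntegrable
    have h2 : ∫ t in ε..ξ, c * deriv φ t = c * (φ ξ - φ ε) := by
      rw [intervalIntegral.integral_const_mul]
      congr 1
      apply intervalIntegral.integral_eq_sub_of_hasDerivAt
      · exact fun t ht => (P.diff t (hsub ht)).hasDerivAt
      · exact (P.derivphi_cont.mono hsub).intervalIntegrable
    have h3 : ∫ t in ε..ξ, (c * deriv φ t + Afun D c φ t) =
        (∫ t in ε..ξ, c * deriv φ t) + ∫ t in ε..ξ, Afun D c φ t := by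
      apply intervalIntegral.integral_add
      · exact (continuousOn_const.mul (P.derivphi_cont.mono hsub)).intervalIntegrable
      · exact hAii ε ξ ⟨hεX.1.le, hεX.2⟩ ⟨hξ.1.le, hξ.2⟩
    have h4 : (∫ t in (0:ℝ)..ε, Afun D c φ t) + ∫ t in ε..ξ, Afun D c φ t =
        ∫ t in (0:ℝ)..ξ, Afun D c φ t :=
      intervalIntegral.integral_add_adjacent_intervals
        (hAii 0 ε ⟨le_refl 0, P.hX.le⟩ ⟨hεX.1.le, hεX.2⟩)
        (hAii ε ξ ⟨hεX.1.le, hεX.2⟩ ⟨hξ.1.le, hξ.2⟩)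
    linarith
  obtain ⟨CA, hCA0, hCA⟩ := P.A_bound
  have hint0 : Filter.Tendsto (fun ε => ∫ t in (0:ℝ)..ε, Afun D c φ t)
      (nhdsWithin 0 (Set.Ioi 0)) (nhds 0) := by
    apply squeeze_zero_norm'
    · filter_upwards [Ioc_mem_nhdsGT_of_mem (Set.mem_Ico.2 ⟨le_refl (0:ℝ), P.hX⟩)] with ε hε
      have : ∀ t ∈ Set.uIoc (0:ℝ) ε, ‖Afun D c φ t‖ ≤ CA := by
        intro t ht
        rw [Set.uIoc_of_le hε.1.le] at ht
        exact hCA t ⟨ht.1.le, le_trans ht.2 hε.2⟩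
      calc ‖∫ t in (0:ℝ)..ε, Afun D c φ t‖ ≤ CA * |ε - 0| :=
            intervalIntegral.norm_integral_le_of_norm_le_const this
        _ = CA * ε := by rw [sub_zero, abs_of_nonneg hε.1.le]
    · have : Filter.Tendsto (fun ε : ℝ => CA * ε) (nhdsWithin 0 (Set.Ioi 0))
          (nhds (CA * 0)) :=
        (tendsto_id.const_mul CA).mono_left nhdsWithin_le_nhds
      simpa using this
  have hφ0 : Filter.Tendsto φ (nhdsWithin 0 (Set.Ioi 0)) (nhds 0) := by
    have := (P.cont.tendsto 0).mono_left (nhdsWithin_le_nhds (s := Set.Ioi (0:ℝ)))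
    rwa [P.zero 0 (le_refl 0)] at this
  have hL : Filter.Tendsto (fun ε => deriv (phiPow D.m φ) ε + c * (φ ξ - φ ε) +
      ((∫ t in (0:ℝ)..ξ, Afun D c φ t) - ∫ t in (0:ℝ)..ε, Afun D c φ t))
      (nhdsWithin 0 (Set.Ioi 0))
      (nhds (0 + c * (φ ξ - 0) + ((∫ t in (0:ℝ)..ξ, Afun D c φ t) - 0))) :=
    (P.lim0.add ((tendsto_const_nhds.sub hφ0).const_mul c)).add
      (tendsto_const_nhds.sub hint0)
  have hev : (fun ε => deriv (phiPow D.m φ) ε + c * (φ ξ - φ ε) +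
      ((∫ t in (0:ℝ)..ξ, Afun D c φ t) - ∫ t in (0:ℝ)..ε, Afun D c φ t))
      =ᶠ[nhdsWithin 0 (Set.Ioi 0)] (fun _ => deriv (phiPow D.m φ) ξ) := by
    filter_upwards [Ioo_mem_nhdsGT_of_mem (Set.mem_Ico.2 ⟨le_refl (0:ℝ), hξ.1⟩)] with ε hε
    exact (key ε hε).symm
  have huniq := tendsto_nhds_unique (Filter.Tendsto.congr' hev hL) tendsto_const_nhds
  rw [← huniq]
  ring

lemma psi_bound {ξ : ℝ} (hξ : ξ ∈ Set.Ioc (0:ℝ) X) :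
    |deriv (phiPow D.m φ) ξ - c * φ ξ| ≤ ξ * (D.d (φ ξ) + D.b (φ ξ)) := by
  have h := P.ftc1 hξ
  have hAbd : ∀ t ∈ Set.uIoc (0:ℝ) ξ, ‖Afun D c φ t‖ ≤ D.d (φ ξ) + D.b (φ ξ) := by
    intro t ht
    rw [Set.uIoc_of_le hξ.1.le] at ht
    have ht1 : φ t ≤ φ ξ := P.mono' ht.2 hξ.2
    have ht2 : φ (t - c * D.r) ≤ φ ξ := by
      apply P.mono' _ hξ.2
      have : 0 ≤ c * D.r := mul_nonneg P.hc.le D.hr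
      linarith [ht.2]
    have hd1 : 0 ≤ D.d (φ t) := D.d_nonneg (P.nonneg (le_trans ht.2 hξ.2))
    have hb1 : 0 ≤ D.b (φ (t - c * D.r)) := by
      apply D.b_nonneg
      apply P.nonneg
      have : 0 ≤ c * D.r := mul_nonneg P.hc.le D.hr
      linarith [le_trans ht.2 hξ.2]
    have hd2 : D.d (φ t) ≤ D.d (φ ξ) :=
      D.d_mono (P.nonneg (le_trans ht.2 hξ.2)) (P.nonneg hξ.2) ht1
    have hb2 : D.b (φ (t - c * D.r)) ≤ D.b (φ ξ) := by
      apply D.b_mono _ (P.nonneg hξ.2) ht2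
      apply P.nonneg
      have : 0 ≤ c * D.r := mul_nonneg P.hc.le D.hr
      linarith [le_trans ht.2 hξ.2]
    rw [Real.norm_eq_abs, Afun, abs_sub_le_iff]
    constructor <;> linarith
  have hbd := intervalIntegral.norm_integral_le_of_norm_le_const hAbd
  rw [sub_zero, abs_of_nonneg hξ.1.le] at hbd
  have heq : deriv (phiPow D.m φ) ξ - c * φ ξ = ∫ t in (0:ℝ)..ξ, Afun D c φ t := by
    linarith
  rw [heq]
  rw [Real.norm_eq_abs] at hbd
  linarith [hbd]

end Prof
namespace Prof

variable {D : FisherData} {c : ℝ} {φ : ℝ → ℝ} {X : ℝ} (P : Prof D c φ X)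

include P

lemma G_cont : ContinuousOn (Gfun D c φ X) (Set.Ioc 0 (φ X)) := by
  have hinv := P.inv_cont
  have h1 : ContinuousOn (fun t => deriv (phiPow D.m φ) (invFn φ X t))
      (Set.Ioc 0 (φ X)) :=
    P.derivm_cont.comp hinv (fun s hs => P.inv_mem hs)
  have h2 : ContinuousOn (fun t : ℝ => t ^ (D.m - 1)) (Set.Ioc 0 (φ X)) :=
    continuousOn_id.rpow_const (fun x _ => Or.inr (le_of_lt D.m1_pos))
  have h3 : ContinuousOn (fun t : ℝ => D.d t) (Set.Ioc 0 (φ X)) :=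
    D.d_cont.mono (fun t ht => le_of_lt ht.1)
  have h4 : ContinuousOn (fun t => D.b (φ (invFn φ X t - c * D.r)))
      (Set.Ioc 0 (φ X)) := by
    apply D.b_cont.comp
      ((P.cont.comp_continuousOn (hinv.sub continuousOn_const)))
    intro t ht
    apply P.nonneg
    have h5 := (P.inv_mem ht).2
    have h6 : 0 ≤ c * D.r := mul_nonneg P.hc.le D.hr
    show invFn φ X t - c * D.r ≤ X
    linarith
  exact (continuousOn_const.mul h1).add ((continuousOn_const.mul h2).mul (h3.sub h4))

lemma G_bound : ∃ M : ℝ, 0 ≤ M ∧ ∀ t ∈ Set.Ioc 0 (φ X), |Gfun D c φ X t| ≤ M := by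
  -- bounds for d and b on [0, φ X]
  obtain ⟨Cd, hCd⟩ := (isCompact_Icc (a := (0:ℝ)) (b := φ X)).exists_bound_of_continuousOn
    (D.d_cont.mono (fun t ht => ht.1))
  obtain ⟨Cb, hCb⟩ := (isCompact_Icc (a := (0:ℝ)) (b := φ X)).exists_bound_of_continuousOn
    (D.b_cont.mono (fun t ht => ht.1))
  have hCd0 : 0 ≤ Cd := le_trans (norm_nonneg _) (hCd 0 ⟨le_refl 0, P.Spos.le⟩)
  have hCb0 : 0 ≤ Cb := le_trans (norm_nonneg _) (hCb 0 ⟨le_refl 0, P.Spos.le⟩)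
  set Mψ : ℝ := c * φ X + X * (Cd + Cb) with hMψ
  set M : ℝ := c * Mψ + D.m * (φ X) ^ (D.m - 1) * (Cd + Cb) with hM
  have hMψ0 : 0 ≤ Mψ := by
    have := P.Spos.le
    have := P.hX.le
    have := P.hc.le
    positivity
  have hM0 : 0 ≤ M := add_nonneg (mul_nonneg P.hc.le hMψ0)
    (mul_nonneg (mul_nonneg D.m_pos.le (Real.rpow_nonneg P.Spos.le _))
      (by linarith))
  refine ⟨M, hM0, fun t ht => ?_⟩
  have hmem := P.inv_mem ht
  have hφinv : φ (invFn φ X t) = t := P.phi_inv ht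
  -- bound the ψ-part
  have hψ : |deriv (phiPow D.m φ) (invFn φ X t)| ≤ Mψ := by
    have h1 := P.psi_bound hmem
    rw [hφinv] at h1
    have h2 : |deriv (phiPow D.m φ) (invFn φ X t)| ≤ |c * t| +
        invFn φ X t * (D.d t + D.b t) := by
      have := abs_sub_abs_le_abs_sub (deriv (phiPow D.m φ) (invFn φ X t)) (c * t)
      linarith [this, h1]
    have h3 : |c * t| ≤ c * φ X := by
      rw [abs_of_nonneg (mul_nonneg P.hc.le ht.1.le)]
      exact mul_le_mul_of_nonneg_left ht.2 P.hc.le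
    have h4 : D.d t + D.b t ≤ Cd + Cb := by
      have := le_trans (le_abs_self _) (hCd t ⟨ht.1.le, ht.2⟩)
      have := le_trans (le_abs_self _) (hCb t ⟨ht.1.le, ht.2⟩)
      linarith
    have h5 : 0 ≤ D.d t + D.b t := by
      have := D.d_nonneg ht.1.le
      have := D.b_nonneg ht.1.le
      linarith
    have h6 : invFn φ X t * (D.d t + D.b t) ≤ X * (Cd + Cb) := by
      apply mul_le_mul hmem.2 h4 h5 P.hX.le
    linarith
  -- bound the rest
  have hrpow : t ^ (D.m - 1) ≤ (φ X) ^ (D.m - 1) :=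
    Real.rpow_le_rpow ht.1.le ht.2 D.m1_pos.le
  have hrpow0 : 0 ≤ t ^ (D.m - 1) := Real.rpow_nonneg ht.1.le _
  have hdb : |D.d t - D.b (φ (invFn φ X t - c * D.r))| ≤ Cd + Cb := by
    have harg : φ (invFn φ X t - c * D.r) ∈ Set.Icc (0:ℝ) (φ X) := by
      have h6 : 0 ≤ c * D.r := mul_nonneg P.hc.le D.hr
      constructor
      · exact P.nonneg (by linarith [hmem.2])
      · exact P.mono' (by linarith [hmem.2]) (le_refl X)
    have h7 := le_trans (le_abs_self _) (hCd t ⟨ht.1.le, ht.2⟩)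
    have h8 := le_trans (le_abs_self _) (hCb _ harg)
    have h9 : 0 ≤ D.d t := D.d_nonneg ht.1.le
    have h10 : 0 ≤ D.b (φ (invFn φ X t - c * D.r)) := D.b_nonneg harg.1
    rw [abs_sub_le_iff]
    constructor <;> linarith
  calc |Gfun D c φ X t| ≤ |c * deriv (phiPow D.m φ) (invFn φ X t)| +
        |D.m * t ^ (D.m - 1) * (D.d t - D.b (φ (invFn φ X t - c * D.r)))| := abs_add_le _ _
    _ ≤ c * Mψ + D.m * (φ X) ^ (D.m - 1) * (Cd + Cb) := by
        apply add_le_add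
        · rw [abs_mul, abs_of_nonneg P.hc.le]
          exact mul_le_mul_of_nonneg_left hψ P.hc.le
        · rw [abs_mul, abs_mul, abs_of_nonneg D.m_pos.le, abs_of_nonneg hrpow0]
          apply mul_le_mul _ hdb (abs_nonneg _)
            (mul_nonneg D.m_pos.le (Real.rpow_nonneg P.Spos.le _))
          exact mul_le_mul_of_nonneg_left hrpow D.m_pos.le
    _ = M := rfl

lemma G_integrableOn : IntegrableOn (Gfun D c φ X) (Set.Ioc 0 (φ X)) volume := by
  obtain ⟨M, hM0, hM⟩ := P.G_bound
  apply MeasureTheory.Integrable.mono' (g := fun _ => M)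
  · exact integrableOn_const measure_Ioc_lt_top.ne
  · exact (P.G_cont.aemeasurable measurableSet_Ioc).aestronglyMeasurable
  · rw [MeasureTheory.ae_restrict_iff' measurableSet_Ioc]
    exact MeasureTheory.ae_of_all _ (fun t ht => by
      rw [Real.norm_eq_abs]; exact hM t ht)

lemma G_ii {a b : ℝ} (ha : a ∈ Set.Icc (0:ℝ) (φ X)) (hb : b ∈ Set.Icc (0:ℝ) (φ X)) :
    IntervalIntegrable (Gfun D c φ X) volume a b := by
  rw [intervalIntegrable_iff]
  apply P.G_integrableOn.mono_set
  apply Set.Ioc_subset_Ioc (le_min ha.1 hb.1) (max_le ha.2 hb.2)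

/-- The energy identity in the phase plane. -/
lemma energy {s : ℝ} (hs : s ∈ Set.Ioc 0 (φ X)) :
    deriv (phiPow D.m φ) (invFn φ X s) * deriv (phiPow D.m φ) (invFn φ X s) =
      2 * ∫ t in (0:ℝ)..s, Gfun D c φ X t := by
  set x := invFn φ X s with hxdef
  have hx : x ∈ Set.Ioc (0:ℝ) X := P.inv_mem hs
  have hφx : φ x = s := P.phi_inv hs
  obtain ⟨M, hM0, hM⟩ := P.G_bound
  have key : ∀ ε ∈ Set.Ioo (0:ℝ) x,
      deriv (phiPow D.m φ) x * deriv (phiPow D.m φ) x =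
      deriv (phiPow D.m φ) ε * deriv (phiPow D.m φ) ε +
        2 * ((∫ t in (0:ℝ)..s, Gfun D c φ X t) -
          ∫ t in (0:ℝ)..(φ ε), Gfun D c φ X t) := by
    intro ε hε
    have hεX : ε ∈ Set.Ioc (0:ℝ) X := ⟨hε.1, le_trans hε.2.le hx.2⟩
    have huI : Set.uIcc ε x = Set.Icc ε x := Set.uIcc_of_le hε.2.le
    have hsub : Set.Icc ε x ⊆ Set.Ioc (0:ℝ) X :=
      fun t ht => ⟨lt_of_lt_of_le hε.1 ht.1, le_trans ht.2 hx.2⟩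
    -- FTC for the squared derivative
    have h1 : ∫ t in ε..x, (2 * (deriv (phiPow D.m φ) t * (c * deriv φ t + Afun D c φ t))) =
        deriv (phiPow D.m φ) x * deriv (phiPow D.m φ) x -
          deriv (phiPow D.m φ) ε * deriv (phiPow D.m φ) ε := by
      apply intervalIntegral.integral_eq_sub_of_hasDerivAt
        (f := fun y => deriv (phiPow D.m φ) y * deriv (phiPow D.m φ) y)
      · intro t ht
        rw [huI] at ht
        have htm : t ∈ Set.Ioc (0:ℝ) X := hsub ht
        have hval : deriv (deriv (phiPow D.m φ)) t = c * deriv φ t + Afun D c φ t := by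
          have := P.ode t htm
          unfold Afun
          linarith
        have h := ((P.diffm2 t htm).hasDerivAt.mul (P.diffm2 t htm).hasDerivAt)
        rw [hval] at h
        convert h using 1
        · rfl
        · rfl
        ring
      · apply ContinuousOn.intervalIntegrable
        rw [huI]
        apply continuousOn_const.mul
        exact (P.derivm_cont.mono hsub).mul
          ((continuousOn_const.mul (P.derivphi_cont.mono hsub)).add
            (P.A_cont.mono (fun t ht => (hsub ht).2)))
    -- rewrite the integrand as (deriv φ) · (G ∘ φ)
    have h2 : Set.EqOn (fun t => 2 * (deriv (phiPow D.m φ) t * (c * deriv φ t + Afun D c φ t)))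
        (fun t => 2 * (deriv φ t * Gfun D c φ X (φ t))) (Set.uIcc ε x) := by
      intro t ht
      rw [huI] at ht
      have htm : t ∈ Set.Ioc (0:ℝ) X := hsub ht
      have hit : invFn φ X (φ t) = t := P.inv_phi htm
      have hde : deriv (phiPow D.m φ) t = D.m * φ t ^ (D.m - 1) * deriv φ t :=
        P.derivm_eq htm
      simp only [Gfun, hit, Afun]
      rw [hde]
      ring
    have h3 : ∫ t in ε..x, (2 * (deriv (phiPow D.m φ) t * (c * deriv φ t + Afun D c φ t))) =
        2 * ∫ t in ε..x, deriv φ t * Gfun D c φ X (φ t) := by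
      rw [intervalIntegral.integral_congr h2, intervalIntegral.integral_const_mul]
    -- change of variables
    have h4 : ∫ t in ε..x, deriv φ t * Gfun D c φ X (φ t) =
        ∫ u in (φ ε)..(φ x), Gfun D c φ X u := by
      have hcv := intervalIntegral.integral_comp_smul_deriv''
        (f := φ) (f' := deriv φ) (g := Gfun D c φ X) (a := ε) (b := x)
        (P.cont.continuousOn)
        (fun t ht => by
          rw [min_eq_left hε.2.le, max_eq_right hε.2.le] at ht
          have htm : t ∈ Set.Ioc (0:ℝ) X := hsub ⟨ht.1.le, ht.2.le⟩
          exact ((P.diff t htm).hasDerivAt).hasDerivWithinAt)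
        (by rw [huI]; exact P.derivphi_cont.mono hsub)
        (by
          apply P.G_cont.mono
          intro u hu
          obtain ⟨t, ht, rfl⟩ := hu
          rw [huI] at ht
          have htm : t ∈ Set.Ioc (0:ℝ) X := hsub ht
          exact ⟨P.pos t htm, P.mono' htm.2 (le_refl X)⟩)
      simpa [smul_eq_mul, Function.comp, mul_comm] using hcv
    have hφε : φ ε ∈ Set.Icc (0:ℝ) (φ X) :=
      ⟨(P.pos ε hεX).le, P.mono' hεX.2 (le_refl X)⟩
    have h5 : (∫ t in (0:ℝ)..(φ ε), Gfun D c φ X t) +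
        ∫ t in (φ ε)..s, Gfun D c φ X t = ∫ t in (0:ℝ)..s, Gfun D c φ X t :=
      intervalIntegral.integral_add_adjacent_intervals
        (P.G_ii ⟨le_refl 0, P.Spos.le⟩ hφε)
        (P.G_ii hφε ⟨hs.1.le, hs.2⟩)
    rw [hφx] at h4
    rw [h3, h4] at h1
    linarith
  -- pass to the limit ε → 0⁺
  have hφ0 : Filter.Tendsto φ (nhdsWithin 0 (Set.Ioi 0)) (nhds 0) := by
    have := (P.cont.tendsto 0).mono_left (nhdsWithin_le_nhds (s := Set.Ioi (0:ℝ)))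
    rwa [P.zero 0 (le_refl 0)] at this
  have htend2 : Filter.Tendsto (fun ε => ∫ t in (0:ℝ)..(φ ε), Gfun D c φ X t)
      (nhdsWithin 0 (Set.Ioi 0)) (nhds 0) := by
    apply squeeze_zero_norm'
    · filter_upwards [Ioo_mem_nhdsGT_of_mem (Set.mem_Ico.2 ⟨le_refl (0:ℝ), hx.1⟩)] with ε hε
      have hεX : ε ∈ Set.Ioc (0:ℝ) X := ⟨hε.1, le_trans hε.2.le hx.2⟩
      have hφε : φ ε ∈ Set.Ioc (0:ℝ) (φ X) :=
        ⟨P.pos ε hεX, P.mono' hεX.2 (le_refl X)⟩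
      have hb : ∀ t ∈ Set.uIoc (0:ℝ) (φ ε), ‖Gfun D c φ X t‖ ≤ M := by
        intro t ht
        rw [Set.uIoc_of_le hφε.1.le] at ht
        rw [Real.norm_eq_abs]
        exact hM t ⟨ht.1, le_trans ht.2 hφε.2⟩
      calc ‖∫ t in (0:ℝ)..(φ ε), Gfun D c φ X t‖ ≤ M * |φ ε - 0| :=
            intervalIntegral.norm_integral_le_of_norm_le_const hb
        _ = M * φ ε := by rw [sub_zero, abs_of_nonneg hφε.1.le]
    · have : Filter.Tendsto (fun ε : ℝ => M * φ ε) (nhdsWithin 0 (Set.Ioi 0))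
          (nhds (M * 0)) := hφ0.const_mul M
      simpa using this
  have hL : Filter.Tendsto (fun ε => deriv (phiPow D.m φ) ε * deriv (phiPow D.m φ) ε +
      2 * ((∫ t in (0:ℝ)..s, Gfun D c φ X t) - ∫ t in (0:ℝ)..(φ ε), Gfun D c φ X t))
      (nhdsWithin 0 (Set.Ioi 0))
      (nhds (0 * 0 + 2 * ((∫ t in (0:ℝ)..s, Gfun D c φ X t) - 0))) :=
    (P.lim0.mul P.lim0).add ((tendsto_const_nhds.sub htend2).const_mul 2)
  have hev : (fun ε => deriv (phiPow D.m φ) ε * deriv (phiPow D.m φ) ε +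
      2 * ((∫ t in (0:ℝ)..s, Gfun D c φ X t) - ∫ t in (0:ℝ)..(φ ε), Gfun D c φ X t))
      =ᶠ[nhdsWithin 0 (Set.Ioi 0)]
      (fun _ => deriv (phiPow D.m φ) x * deriv (phiPow D.m φ) x) := by
    filter_upwards [Ioo_mem_nhdsGT_of_mem (Set.mem_Ico.2 ⟨le_refl (0:ℝ), hx.1⟩)] with ε hε
    exact (key ε hε).symm
  have huniq := tendsto_nhds_unique (Filter.Tendsto.congr' hev hL) tendsto_const_nhds
  rw [← huniq]
  ring

end Prof
set_option maxHeartbeats 2000000 in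
theorem profile_monotone_in_speed (D : FisherData) (k c₁ c₂ : ℝ)
    (hk : D.κ ≤ k) (hc₂ : 0 < c₂) (hc : c₂ < c₁)
    (ξ₀₁ ξ₀₂ : EReal) (φ₁ φ₂ : ℝ → ℝ)
    (h₁ : IsSharpLocalProfile D c₁ k ξ₀₁ φ₁) (he₁ : EdgeAsymp D.m c₁ φ₁)
    (hmax₁ : ∀ (ξ₀' : EReal) (φ' : ℝ → ℝ),
      IsSharpLocalProfile D c₁ k ξ₀' φ' → EdgeAsymp D.m c₁ φ' → ξ₀' ≤ ξ₀₁)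
    (h₂ : IsSharpLocalProfile D c₂ k ξ₀₂ φ₂) (he₂ : EdgeAsymp D.m c₂ φ₂)
    (hmax₂ : ∀ (ξ₀' : EReal) (φ' : ℝ → ℝ),
      IsSharpLocalProfile D c₂ k ξ₀' φ' → EdgeAsymp D.m c₂ φ' → ξ₀' ≤ ξ₀₂)
    (ξh₁ ξh₂ : EReal)
    (hξh₁pos : 0 < ξh₁) (hξh₁le : ξh₁ ≤ ξ₀₁)
    (hmono₁ : StrictMonoOn φ₁ {ξ : ℝ | 0 < ξ ∧ (ξ : EReal) < ξh₁})
    (hξh₁max : ∀ ζ : EReal, ζ ≤ ξ₀₁ →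
      StrictMonoOn φ₁ {ξ : ℝ | 0 < ξ ∧ (ξ : EReal) < ζ} → ζ ≤ ξh₁)
    (hξh₂pos : 0 < ξh₂) (hξh₂le : ξh₂ ≤ ξ₀₂)
    (hmono₂ : StrictMonoOn φ₂ {ξ : ℝ | 0 < ξ ∧ (ξ : EReal) < ξh₂})
    (hξh₂max : ∀ ζ : EReal, ζ ≤ ξ₀₂ →
      StrictMonoOn φ₂ {ξ : ℝ | 0 < ξ ∧ (ξ : EReal) < ζ} → ζ ≤ ξh₂) :
    ∀ ξ : ℝ, 0 < ξ → (ξ : EReal) < min ξh₁ ξh₂ → φ₂ ξ < φ₁ ξ := by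
  intro ξb hξbpos hξblt
  by_contra hcon
  push_neg at hcon
  obtain ⟨h₁pos, h₁cont, h₁zero, h₁mem, h₁diff, h₁diffm, h₁diffm2, h₁lim, h₁ode⟩ := h₁
  obtain ⟨h₂pos, h₂cont, h₂zero, h₂mem, h₂diff, h₂diffm, h₂diffm2, h₂lim, h₂ode⟩ := h₂
  have hξb1 : (ξb : EReal) < ξh₁ := lt_of_lt_of_le hξblt (min_le_left _ _)
  have hξb2 : (ξb : EReal) < ξh₂ := lt_of_lt_of_le hξblt (min_le_right _ _)
  have hc₁ : 0 < c₁ := lt_trans hc₂ hc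
  have hm1 : 0 < D.m - 1 := D.m1_pos
  -- Step A : ordering near the origin from the edge asymptotics
  have hL : ((D.m - 1) * c₂ / D.m) ^ (1 / (D.m - 1)) <
      ((D.m - 1) * c₁ / D.m) ^ (1 / (D.m - 1)) := by
    apply Real.rpow_lt_rpow
    · exact div_nonneg (mul_nonneg hm1.le hc₂.le) D.m_pos.le
    · rw [div_lt_div_iff₀ D.m_pos D.m_pos]
      nlinarith [mul_pos (mul_pos hm1 (sub_pos.2 hc)) D.m_pos]
    · positivity
  have hA : ∃ δ > 0, ∀ x : ℝ, 0 < x → x < δ → φ₂ x < φ₁ x := by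
    unfold EdgeAsymp at he₁ he₂
    have hsub := he₁.sub he₂
    have hev := hsub.eventually (eventually_gt_nhds (sub_pos.2 hL))
    obtain ⟨u, hu, hsubset⟩ := mem_nhdsGT_iff_exists_Ioo_subset.1 hev
    refine ⟨u, hu, fun x hx hxu => ?_⟩
    have h0 := hsubset ⟨hx, hxu⟩
    simp only [Set.mem_setOf_eq] at h0
    have hxe : 0 < x ^ (-(1 / (D.m - 1))) := Real.rpow_pos_of_pos hx _
    have h2 : 0 < (φ₁ x - φ₂ x) * x ^ (-(1 / (D.m - 1))) := by
      rw [sub_mul]; linarith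
    rcases mul_pos_iff.1 h2 with ⟨ha, _⟩ | ⟨_, hb⟩
    · linarith
    · linarith
  obtain ⟨δ, hδpos, hδ⟩ := hA
  by_cases hδξb : ξb < δ
  · exact absurd hcon (not_le.2 (hδ ξb hξbpos hδξb))
  push_neg at hδξb
  -- Step B : the first crossing point ξs
  set T := {x : ℝ | x ∈ Set.Icc δ ξb ∧ φ₁ x ≤ φ₂ x} with hT
  have hTne : T.Nonempty := ⟨ξb, ⟨hδξb, le_refl _⟩, hcon⟩
  have hTbdd : BddBelow T := ⟨δ, fun x hx => hx.1.1⟩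
  set ξs := sInf T with hξsdef
  have hξsmem : ξs ∈ Set.Icc δ ξb :=
    ⟨le_csInf hTne (fun x hx => hx.1.1), csInf_le hTbdd ⟨⟨hδξb, le_refl _⟩, hcon⟩⟩
  have hξspos : 0 < ξs := lt_of_lt_of_le hδpos hξsmem.1
  have hord : ∀ x : ℝ, 0 < x → x < ξs → φ₂ x < φ₁ x := by
    intro x hx hxξs
    by_cases hxδ : x < δ
    · exact hδ x hx hxδ
    · push_neg at hxδ
      by_contra hcc
      push_neg at hcc
      exact absurd (csInf_le hTbdd ⟨⟨hxδ, le_trans hxξs.le hξsmem.2⟩, hcc⟩)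
        (not_le.2 hxξs)
  have hξsT : ξs ∈ T := by
    have hclosed : IsClosed T := by
      have : T = Set.Icc δ ξb ∩ {x | φ₁ x ≤ φ₂ x} := rfl
      rw [this]
      exact isClosed_Icc.inter (isClosed_le h₁cont h₂cont)
    exact hclosed.closure_subset (csInf_mem_closure hTne hTbdd)
  have heqs : φ₁ ξs = φ₂ ξs := by
    refine le_antisymm hξsT.2 ?_
    have h2 : Filter.Tendsto (fun x => φ₁ x - φ₂ x)
        (nhdsWithin ξs (Set.Ioo 0 ξs)) (nhds (φ₁ ξs - φ₂ ξs)) :=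
      ((h₁cont.sub h₂cont).tendsto ξs).mono_left nhdsWithin_le_nhds
    have hne : (nhdsWithin ξs (Set.Ioo 0 ξs)).NeBot := by
      apply mem_closure_iff_nhdsWithin_neBot.1
      rw [closure_Ioo (ne_of_lt hξspos)]
      exact ⟨hξspos.le, le_refl _⟩
    have h3 : (0:ℝ) ≤ φ₁ ξs - φ₂ ξs := by
      apply ge_of_tendsto h2
      filter_upwards [self_mem_nhdsWithin] with x hx
      exact sub_nonneg.2 (hord x hx.1 hx.2).le
    linarith
  -- coercion helpers
  have hξsE1 : (ξs : EReal) < ξh₁ :=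
    lt_of_le_of_lt (EReal.coe_le_coe_iff.2 hξsmem.2) hξb1
  have hξsE2 : (ξs : EReal) < ξh₂ :=
    lt_of_le_of_lt (EReal.coe_le_coe_iff.2 hξsmem.2) hξb2
  have hcoe1h : ∀ {x : ℝ}, x ∈ Set.Ioc (0:ℝ) ξs → (x : EReal) < ξh₁ :=
    fun hx => lt_of_le_of_lt (EReal.coe_le_coe_iff.2 hx.2) hξsE1
  have hcoe2h : ∀ {x : ℝ}, x ∈ Set.Ioc (0:ℝ) ξs → (x : EReal) < ξh₂ :=
    fun hx => lt_of_le_of_lt (EReal.coe_le_coe_iff.2 hx.2) hξsE2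
  have hcoe1 : ∀ {x : ℝ}, x ∈ Set.Ioc (0:ℝ) ξs → (x : EReal) < ξ₀₁ :=
    fun hx => lt_of_lt_of_le (hcoe1h hx) hξh₁le
  have hcoe2 : ∀ {x : ℝ}, x ∈ Set.Ioc (0:ℝ) ξs → (x : EReal) < ξ₀₂ :=
    fun hx => lt_of_lt_of_le (hcoe2h hx) hξh₂le
  -- the profile bundles
  have P₁ : Prof D c₁ φ₁ ξs :=
    ⟨hc₁, hξspos, h₁cont, h₁zero,
      fun ξ hξ => (h₁mem ξ hξ.1 (hcoe1 hξ)).1,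
      fun x hx y hy hxy => hmono₁ ⟨hx.1, hcoe1h hx⟩ ⟨hy.1, hcoe1h hy⟩ hxy,
      fun ξ hξ => h₁diff ξ hξ.1 (hcoe1 hξ),
      fun ξ hξ => h₁diffm ξ hξ.1 (hcoe1 hξ),
      fun ξ hξ => h₁diffm2 ξ hξ.1 (hcoe1 hξ),
      h₁lim,
      fun ξ hξ => h₁ode ξ hξ.1 (hcoe1 hξ)⟩
  have P₂ : Prof D c₂ φ₂ ξs :=
    ⟨hc₂, hξspos, h₂cont, h₂zero,
      fun ξ hξ => (h₂mem ξ hξ.1 (hcoe2 hξ)).1,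
      fun x hx y hy hxy => hmono₂ ⟨hx.1, hcoe2h hx⟩ ⟨hy.1, hcoe2h hy⟩ hxy,
      fun ξ hξ => h₂diff ξ hξ.1 (hcoe2 hξ),
      fun ξ hξ => h₂diffm ξ hξ.1 (hcoe2 hξ),
      fun ξ hξ => h₂diffm2 ξ hξ.1 (hcoe2 hξ),
      h₂lim,
      fun ξ hξ => h₂ode ξ hξ.1 (hcoe2 hξ)⟩
  have hIoc12 : Set.Ioc (0:ℝ) (φ₁ ξs) = Set.Ioc (0:ℝ) (φ₂ ξs) := by rw [heqs]
  have hξsIoc : ξs ∈ Set.Ioc (0:ℝ) ξs := ⟨hξspos, le_refl _⟩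
  -- the inverse at the top level
  have hinv1S : invFn φ₁ ξs (φ₁ ξs) = ξs := P₁.inv_X
  have hinv2S : invFn φ₂ ξs (φ₂ ξs) = ξs := P₂.inv_X
  -- comparison of the derivatives of φ^m at the crossing point
  have hw : deriv (phiPow D.m φ₁) ξs ≤ deriv (phiPow D.m φ₂) ξs := by
    have hdg : HasDerivAt (fun x => phiPow D.m φ₁ x - phiPow D.m φ₂ x)
        (deriv (phiPow D.m φ₁) ξs - deriv (phiPow D.m φ₂) ξs) ξs :=
      ((P₁.diffm ξs hξsIoc).hasDerivAt.sub (P₂.diffm ξs hξsIoc).hasDerivAt)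
    rw [hasDerivAt_iff_tendsto_slope] at hdg
    have hdg2 := hdg.mono_left (nhdsWithin_mono ξs
      (fun y (hy : y ∈ Set.Ioo (0:ℝ) ξs) =>
        Set.mem_compl_singleton_iff.2 (ne_of_lt hy.2)))
    haveI : (nhdsWithin ξs (Set.Ioo 0 ξs)).NeBot := by
      apply mem_closure_iff_nhdsWithin_neBot.1
      rw [closure_Ioo (ne_of_lt hξspos)]
      exact ⟨hξspos.le, le_refl _⟩
    have hle : deriv (phiPow D.m φ₁) ξs - deriv (phiPow D.m φ₂) ξs ≤ 0 := by
      apply le_of_tendsto hdg2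
      filter_upwards [self_mem_nhdsWithin] with y hy
      have hφ : φ₂ y < φ₁ y := hord y hy.1 hy.2
      have h0 : phiPow D.m φ₂ y ≤ phiPow D.m φ₁ y :=
        Real.rpow_le_rpow (P₂.nonneg hy.2.le) hφ.le D.m_pos.le
      have hgξs : phiPow D.m φ₁ ξs - phiPow D.m φ₂ ξs = 0 := by
        simp [phiPow, heqs]
      rw [slope_def_field]
      rw [hgξs, sub_zero]
      apply div_nonpos_iff.mpr
      left
      exact ⟨by linarith, by linarith [hy.2]⟩
    linarith
  -- Step E : near-zero comparison of ψ
  obtain ⟨K, hK0, hK⟩ := D.linbound (φ₁ ξs)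
  have hε0pos : 0 < (c₁ - c₂) / (2 * (K + 1)) := by
    apply div_pos (by linarith) (by linarith)
  obtain ⟨δ₁, hδ₁pos, hδ₁⟩ := P₁.inv_small hε0pos
  obtain ⟨δ₂, hδ₂pos, hδ₂⟩ := P₂.inv_small hε0pos
  have hEE : ∀ s ∈ Set.Ioc (0:ℝ) (φ₁ ξs), s < min δ₁ δ₂ →
      deriv (phiPow D.m φ₂) (invFn φ₂ ξs s) <
        deriv (phiPow D.m φ₁) (invFn φ₁ ξs s) := by
    intro s hs hsδ
    have hs2 : s ∈ Set.Ioc (0:ℝ) (φ₂ ξs) := hIoc12 ▸ hs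
    have hb1 := P₁.psi_bound (P₁.inv_mem hs)
    have hb2 := P₂.psi_bound (P₂.inv_mem hs2)
    rw [P₁.phi_inv hs] at hb1
    rw [P₂.phi_inv hs2] at hb2
    have hKs : D.d s + D.b s ≤ K * s := hK s ⟨hs.1.le, hs.2⟩
    have hdb0 : 0 ≤ D.d s + D.b s :=
      add_nonneg (D.d_nonneg hs.1.le) (D.b_nonneg hs.1.le)
    have hi1 : invFn φ₁ ξs s < (c₁ - c₂) / (2 * (K + 1)) :=
      hδ₁ s hs (lt_of_lt_of_le hsδ (min_le_left _ _))
    have hi2 : invFn φ₂ ξs s < (c₁ - c₂) / (2 * (K + 1)) :=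
      hδ₂ s hs2 (lt_of_lt_of_le hsδ (min_le_right _ _))
    have e1 := abs_le.1 hb1
    have e2 := abs_le.1 hb2
    have f1 : invFn φ₁ ξs s * (D.d s + D.b s) ≤
        (c₁ - c₂) / (2 * (K + 1)) * (K * s) :=
      mul_le_mul hi1.le hKs hdb0 hε0pos.le
    have f2 : invFn φ₂ ξs s * (D.d s + D.b s) ≤
        (c₁ - c₂) / (2 * (K + 1)) * (K * s) :=
      mul_le_mul hi2.le hKs hdb0 hε0pos.le
    have f3 : 2 * ((c₁ - c₂) / (2 * (K + 1)) * (K * s)) < (c₁ - c₂) * s := by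
      have h5 : 2 * ((c₁ - c₂) / (2 * (K + 1))) * (K + 1) = c₁ - c₂ := by
        field_simp
      nlinarith [mul_pos hε0pos hs.1]
    linarith [e1.1, e2.2]
  -- Step F : the first crossing of the ψ's
  set SS := {s : ℝ | s ∈ Set.Icc (min (min δ₁ δ₂) (φ₁ ξs)) (φ₁ ξs) ∧
    deriv (phiPow D.m φ₁) (invFn φ₁ ξs s) ≤
      deriv (phiPow D.m φ₂) (invFn φ₂ ξs s)} with hSSdef
  have hlpos : 0 < min (min δ₁ δ₂) (φ₁ ξs) := lt_min (lt_min hδ₁pos hδ₂pos) P₁.Spos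
  have hSStop : φ₁ ξs ∈ SS := by
    refine ⟨⟨min_le_right _ _, le_refl _⟩, ?_⟩
    rw [hinv1S]
    have h6 : invFn φ₂ ξs (φ₁ ξs) = ξs := by rw [heqs]; exact hinv2S
    rw [h6]
    exact hw
  have hSSne : SS.Nonempty := ⟨_, hSStop⟩
  have hSSbdd : BddBelow SS := ⟨min (min δ₁ δ₂) (φ₁ ξs), fun x hx => hx.1.1⟩
  set s₀ := sInf SS with hs₀def
  have hs₀mem : s₀ ∈ Set.Icc (min (min δ₁ δ₂) (φ₁ ξs)) (φ₁ ξs) :=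
    ⟨le_csInf hSSne (fun x hx => hx.1.1), csInf_le hSSbdd hSStop⟩
  have hs₀pos : 0 < s₀ := lt_of_lt_of_le hlpos hs₀mem.1
  have hs₀Ioc : s₀ ∈ Set.Ioc (0:ℝ) (φ₁ ξs) := ⟨hs₀pos, hs₀mem.2⟩
  have hψlt : ∀ s ∈ Set.Ioc (0:ℝ) (φ₁ ξs), s < s₀ →
      deriv (phiPow D.m φ₂) (invFn φ₂ ξs s) <
        deriv (phiPow D.m φ₁) (invFn φ₁ ξs s) := by
    intro s hs hss₀
    by_cases hsl : s < min δ₁ δ₂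
    · exact hEE s hs hsl
    · push_neg at hsl
      by_contra hcc
      push_neg at hcc
      have hsmem : s ∈ SS := ⟨⟨le_trans (min_le_left _ _) hsl, hs.2⟩, hcc⟩
      exact absurd (csInf_le hSSbdd hsmem) (not_le.2 hss₀)
  -- nonnegativity of the ψ's
  have hψ1nn : ∀ s ∈ Set.Ioc (0:ℝ) (φ₁ ξs), 0 ≤ deriv (phiPow D.m φ₁) (invFn φ₁ ξs s) :=
    fun s hs => P₁.derivm_nonneg (P₁.inv_mem hs)
  have hψ2nn : ∀ s ∈ Set.Ioc (0:ℝ) (φ₂ ξs), 0 ≤ deriv (phiPow D.m φ₂) (invFn φ₂ ξs s) :=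
    fun s hs => P₂.derivm_nonneg (P₂.inv_mem hs)
  -- inv₁ ≤ inv₂ below s₀
  have hinvle : ∀ t ∈ Set.Ioc (0:ℝ) s₀, invFn φ₁ ξs t ≤ invFn φ₂ ξs t := by
    intro t ht
    have htm : t ∈ Set.Ioc (0:ℝ) (φ₁ ξs) := ⟨ht.1, le_trans ht.2 hs₀mem.2⟩
    have htm2 : t ∈ Set.Ioc (0:ℝ) (φ₂ ξs) := hIoc12 ▸ htm
    by_contra hcc
    push_neg at hcc
    have h1 : φ₂ (invFn φ₂ ξs t) = t := P₂.phi_inv htm2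
    have h2 : φ₁ (invFn φ₁ ξs t) = t := P₁.phi_inv htm
    have hq := P₂.inv_mem htm2
    have hp := P₁.inv_mem htm
    rcases eq_or_lt_of_le hp.2 with hpX | hpX
    · have h3 : φ₂ (invFn φ₂ ξs t) < φ₂ ξs :=
        P₂.mono hq hξsIoc (by rw [hpX] at hcc; exact hcc)
      rw [h1] at h3
      rw [hpX] at h2
      rw [heqs] at h2
      linarith
    · have h3 : φ₂ (invFn φ₁ ξs t) < φ₁ (invFn φ₁ ξs t) := hord _ hp.1 hpX
      have h4 : φ₂ (invFn φ₂ ξs t) ≤ φ₂ (invFn φ₁ ξs t) := P₂.mono' hcc.le hp.2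
      rw [h1] at h4
      rw [h2] at h3
      linarith
  -- Step I : the gap lemma
  have gap : ∀ σ t : ℝ, 0 < σ → σ ≤ t → t ≤ s₀ →
      invFn φ₁ ξs t - invFn φ₁ ξs σ ≤ invFn φ₂ ξs t - invFn φ₂ ξs σ := by
    intro σ t hσ hσt hts₀
    rcases eq_or_lt_of_le hσt with rfl | hσt
    · simp
    have htm : t ∈ Set.Ioc (0:ℝ) (φ₁ ξs) := ⟨lt_trans hσ hσt, le_trans hts₀ hs₀mem.2⟩
    have hσm : σ ∈ Set.Ioc (0:ℝ) (φ₁ ξs) := ⟨hσ, le_trans hσt.le htm.2⟩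
    have htm2 : t ∈ Set.Ioc (0:ℝ) (φ₂ ξs) := hIoc12 ▸ htm
    have hσm2 : σ ∈ Set.Ioc (0:ℝ) (φ₂ ξs) := hIoc12 ▸ hσm
    have ham := P₂.inv_mem hσm2
    have hbm := P₂.inv_mem htm2
    have hab : invFn φ₂ ξs σ < invFn φ₂ ξs t := P₂.inv_lt_inv hσm2 htm2 hσt
    have hφa : φ₂ (invFn φ₂ ξs σ) = σ := P₂.phi_inv hσm2
    have hφb : φ₂ (invFn φ₂ ξs t) = t := P₂.phi_inv htm2
    have hmapsTo : ∀ ζ ∈ Set.Icc (invFn φ₂ ξs σ) (invFn φ₂ ξs t),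
        φ₂ ζ ∈ Set.Icc σ t := by
      intro ζ hζ
      constructor
      · rw [← hφa]; exact P₂.mono' hζ.1 (le_trans hζ.2 hbm.2)
      · rw [← hφb]; exact P₂.mono' hζ.2 hbm.2
    have hmemIoc : ∀ ζ ∈ Set.Icc (invFn φ₂ ξs σ) (invFn φ₂ ξs t),
        φ₂ ζ ∈ Set.Ioc (0:ℝ) (φ₁ ξs) := fun ζ hζ =>
      ⟨lt_of_lt_of_le hσ (hmapsTo ζ hζ).1, le_trans (hmapsTo ζ hζ).2 htm.2⟩
    have hζIoc : ∀ ζ ∈ Set.Icc (invFn φ₂ ξs σ) (invFn φ₂ ξs t),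
        ζ ∈ Set.Ioc (0:ℝ) ξs := fun ζ hζ =>
      ⟨lt_of_lt_of_le ham.1 hζ.1, le_trans hζ.2 hbm.2⟩
    have hD : ∀ ζ ∈ Set.Ioo (invFn φ₂ ξs σ) (invFn φ₂ ξs t),
        HasDerivAt (fun ζ => ζ - invFn φ₁ ξs (φ₂ ζ))
          (1 - (deriv φ₁ (invFn φ₁ ξs (φ₂ ζ)))⁻¹ * deriv φ₂ ζ) ζ ∧
          (deriv φ₁ (invFn φ₁ ξs (φ₂ ζ)))⁻¹ * deriv φ₂ ζ ≤ 1 := by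
      intro ζ hζ
      have hζIcc : ζ ∈ Set.Icc (invFn φ₂ ξs σ) (invFn φ₂ ξs t) := ⟨hζ.1.le, hζ.2.le⟩
      have hζm : ζ ∈ Set.Ioc (0:ℝ) ξs := hζIoc ζ hζIcc
      have hum : φ₂ ζ ∈ Set.Ioc (0:ℝ) (φ₁ ξs) := hmemIoc ζ hζIcc
      have hum2 : φ₂ ζ ∈ Set.Ioc (0:ℝ) (φ₂ ξs) := hIoc12 ▸ hum
      have huσt : φ₂ ζ < t := by
        have := P₂.mono hζm hbm hζ.2
        rwa [hφb] at this
      have hus₀ : φ₂ ζ < s₀ := lt_of_lt_of_le huσt hts₀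
      have hult : φ₂ ζ < φ₁ ξs := lt_of_lt_of_le hus₀ hs₀mem.2
      have hψu : deriv (phiPow D.m φ₂) (invFn φ₂ ξs (φ₂ ζ)) <
          deriv (phiPow D.m φ₁) (invFn φ₁ ξs (φ₂ ζ)) := hψlt _ hum hus₀
      have hψ2u : 0 ≤ deriv (phiPow D.m φ₂) (invFn φ₂ ξs (φ₂ ζ)) := hψ2nn _ hum2
      have hψ1u : 0 < deriv (phiPow D.m φ₁) (invFn φ₁ ξs (φ₂ ζ)) :=
        lt_of_le_of_lt hψ2u hψu
      have hx1 : invFn φ₁ ξs (φ₂ ζ) ∈ Set.Ioc (0:ℝ) ξs := P₁.inv_mem hum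
      have hApos : 0 < D.m * (φ₂ ζ) ^ (D.m - 1) :=
        mul_pos D.m_pos (Real.rpow_pos_of_pos hum.1 _)
      have hder1 : deriv φ₁ (invFn φ₁ ξs (φ₂ ζ)) =
          deriv (phiPow D.m φ₁) (invFn φ₁ ξs (φ₂ ζ)) / (D.m * (φ₂ ζ) ^ (D.m - 1)) := by
        rw [P₁.derivphi_eq hx1, P₁.phi_inv hum]
      have hder1pos : 0 < deriv φ₁ (invFn φ₁ ξs (φ₂ ζ)) := by
        rw [hder1]; exact div_pos hψ1u hApos
      have hinv2ζ : invFn φ₂ ξs (φ₂ ζ) = ζ := P₂.inv_phi hζm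
      have hder2 : deriv φ₂ ζ =
          deriv (phiPow D.m φ₂) (invFn φ₂ ξs (φ₂ ζ)) / (D.m * (φ₂ ζ) ^ (D.m - 1)) := by
        rw [P₂.derivphi_eq hζm, hinv2ζ]
      have hd1 : HasDerivAt (invFn φ₁ ξs) (deriv φ₁ (invFn φ₁ ξs (φ₂ ζ)))⁻¹ (φ₂ ζ) := by
        apply HasDerivAt.of_local_left_inverse
        · exact P₁.inv_cont.continuousAt (Ioc_mem_nhds hum.1 hult)
        · exact (P₁.diff _ hx1).hasDerivAt
        · exact ne_of_gt hder1pos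
        · filter_upwards [isOpen_Ioo.mem_nhds
            (show φ₂ ζ ∈ Set.Ioo (0:ℝ) (φ₁ ξs) from ⟨hum.1, hult⟩)] with y hy
          exact P₁.phi_inv ⟨hy.1, hy.2.le⟩
      have hd2 := hd1.comp ζ (P₂.diff ζ hζm).hasDerivAt
      refine ⟨(hasDerivAt_id ζ).sub hd2, ?_⟩
      rw [hder1, hder2, inv_div, div_mul_div_comm,
        div_le_one (mul_pos hψ1u hApos)]
      nlinarith [mul_le_mul_of_nonneg_left hψu.le hApos.le]
    have hmono : MonotoneOn (fun ζ => ζ - invFn φ₁ ξs (φ₂ ζ))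
        (Set.Icc (invFn φ₂ ξs σ) (invFn φ₂ ξs t)) := by
      apply monotoneOn_of_deriv_nonneg (convex_Icc _ _)
      · exact ContinuousOn.sub continuousOn_id
          (P₁.inv_cont.comp (h₂cont.continuousOn) hmemIoc)
      · intro ζ hζ
        rw [interior_Icc] at hζ
        exact ((hD ζ hζ).1).differentiableAt.differentiableWithinAt
      · intro ζ hζ
        rw [interior_Icc] at hζ
        rw [(hD ζ hζ).1.deriv]
        linarith [(hD ζ hζ).2]
    have hfinal := hmono (Set.left_mem_Icc.2 hab.le) (Set.right_mem_Icc.2 hab.le) hab.le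
    dsimp only at hfinal
    rw [hφa, hφb] at hfinal
    linarith
  -- Step H : comparison of the delayed terms
  have hB : ∀ u ∈ Set.Ioc (0:ℝ) s₀,
      D.b (φ₁ (invFn φ₁ ξs u - c₁ * D.r)) ≤ D.b (φ₂ (invFn φ₂ ξs u - c₂ * D.r)) := by
    intro u hu
    have hum : u ∈ Set.Ioc (0:ℝ) (φ₁ ξs) := ⟨hu.1, le_trans hu.2 hs₀mem.2⟩
    have hum2 : u ∈ Set.Ioc (0:ℝ) (φ₂ ξs) := hIoc12 ▸ hum
    have hp := P₁.inv_mem hum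
    have hq := P₂.inv_mem hum2
    have hinvle' := hinvle u hu
    have hrr : c₂ * D.r ≤ c₁ * D.r := mul_le_mul_of_nonneg_right hc.le D.hr
    have hr2 : 0 ≤ c₂ * D.r := mul_nonneg hc₂.le D.hr
    have hr1 : 0 ≤ c₁ * D.r := mul_nonneg hc₁.le D.hr
    have hφ₂q0 : 0 ≤ φ₂ (invFn φ₂ ξs u - c₂ * D.r) := P₂.nonneg (by linarith [hq.2])
    rcases le_or_gt (invFn φ₁ ξs u - c₁ * D.r) 0 with hp0 | hp0
    · rw [h₁zero _ hp0, D.hb0]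
      exact D.b_nonneg hφ₂q0
    · have hargm : invFn φ₁ ξs u - c₁ * D.r ∈ Set.Ioc (0:ℝ) ξs :=
        ⟨hp0, by linarith [hp.2]⟩
      have hσ1pos : 0 < φ₁ (invFn φ₁ ξs u - c₁ * D.r) := P₁.pos _ hargm
      have hσ1le : φ₁ (invFn φ₁ ξs u - c₁ * D.r) ≤ u := by
        have h6 := P₁.mono' (show invFn φ₁ ξs u - c₁ * D.r ≤ invFn φ₁ ξs u by linarith)
          hp.2
        rwa [P₁.phi_inv hum] at h6
      have hσ1m : φ₁ (invFn φ₁ ξs u - c₁ * D.r) ∈ Set.Ioc (0:ℝ) (φ₁ ξs) :=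
        ⟨hσ1pos, le_trans hσ1le hum.2⟩
      have hinvσ1 : invFn φ₁ ξs (φ₁ (invFn φ₁ ξs u - c₁ * D.r)) =
          invFn φ₁ ξs u - c₁ * D.r := P₁.inv_phi hargm
      have hgap := gap (φ₁ (invFn φ₁ ξs u - c₁ * D.r)) u hσ1pos hσ1le hu.2
      rw [hinvσ1] at hgap
      have h7 : invFn φ₂ ξs (φ₁ (invFn φ₁ ξs u - c₁ * D.r)) ≤
          invFn φ₂ ξs u - c₂ * D.r := by linarith
      have h8 : φ₂ (invFn φ₂ ξs (φ₁ (invFn φ₁ ξs u - c₁ * D.r))) =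
          φ₁ (invFn φ₁ ξs u - c₁ * D.r) := P₂.phi_inv (hIoc12 ▸ hσ1m)
      have h9 := P₂.mono' h7 (by linarith [hq.2] : invFn φ₂ ξs u - c₂ * D.r ≤ ξs)
      rw [h8] at h9
      exact D.b_mono (le_of_lt hσ1pos) hφ₂q0 h9
  -- ψ₁ s₀ ≤ ψ₂ s₀, since s₀ is in the closure of SS
  have hs₀SS : deriv (phiPow D.m φ₁) (invFn φ₁ ξs s₀) ≤
      deriv (phiPow D.m φ₂) (invFn φ₂ ξs s₀) := by
    have hcl : s₀ ∈ closure SS := csInf_mem_closure hSSne hSSbdd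
    have hSSsub : SS ⊆ Set.Ioc (0:ℝ) (φ₁ ξs) :=
      fun x hx => ⟨lt_of_lt_of_le hlpos hx.1.1, hx.1.2⟩
    have hc1' : ContinuousOn (fun s => deriv (phiPow D.m φ₁) (invFn φ₁ ξs s))
        (Set.Ioc (0:ℝ) (φ₁ ξs)) :=
      P₁.derivm_cont.comp P₁.inv_cont (fun s hs => P₁.inv_mem hs)
    have hc2' : ContinuousOn (fun s => deriv (phiPow D.m φ₂) (invFn φ₂ ξs s))
        (Set.Ioc (0:ℝ) (φ₁ ξs)) := by
      rw [hIoc12]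
      exact P₂.derivm_cont.comp P₂.inv_cont (fun s hs => P₂.inv_mem hs)
    have hcw : ContinuousWithinAt (fun s => deriv (phiPow D.m φ₂) (invFn φ₂ ξs s) -
        deriv (phiPow D.m φ₁) (invFn φ₁ ξs s)) SS s₀ :=
      (((hc2'.sub hc1')) s₀ hs₀Ioc).mono hSSsub
    haveI : (nhdsWithin s₀ SS).NeBot := mem_closure_iff_nhdsWithin_neBot.1 hcl
    have h0 : (0:ℝ) ≤ deriv (phiPow D.m φ₂) (invFn φ₂ ξs s₀) -
        deriv (phiPow D.m φ₁) (invFn φ₁ ξs s₀) := by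
      apply ge_of_tendsto hcw
      filter_upwards [self_mem_nhdsWithin] with x hx
      exact sub_nonneg.2 hx.2
    linarith
  -- Step G : contradiction via the energy identities
  have hE₁ := P₁.energy hs₀Ioc
  have hE₂ := P₂.energy (hIoc12 ▸ hs₀Ioc)
  have hψ1s₀nn : 0 ≤ deriv (phiPow D.m φ₁) (invFn φ₁ ξs s₀) := hψ1nn s₀ hs₀Ioc
  have hsq : deriv (phiPow D.m φ₁) (invFn φ₁ ξs s₀) *
      deriv (phiPow D.m φ₁) (invFn φ₁ ξs s₀) ≤
        deriv (phiPow D.m φ₂) (invFn φ₂ ξs s₀) *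
          deriv (phiPow D.m φ₂) (invFn φ₂ ξs s₀) :=
    mul_self_le_mul_self hψ1s₀nn hs₀SS
  have hii1 : IntervalIntegrable (Gfun D c₁ φ₁ ξs) volume 0 s₀ :=
    P₁.G_ii ⟨le_refl 0, P₁.Spos.le⟩ ⟨hs₀pos.le, hs₀mem.2⟩
  have hii2 : IntervalIntegrable (Gfun D c₂ φ₂ ξs) volume 0 s₀ :=
    P₂.G_ii ⟨le_refl 0, P₂.Spos.le⟩ ⟨hs₀pos.le, by rw [← heqs]; exact hs₀mem.2⟩
  have hpos : 0 < ∫ t in (0:ℝ)..s₀, (Gfun D c₁ φ₁ ξs t - Gfun D c₂ φ₂ ξs t) := by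
    apply intervalIntegral.intervalIntegral_pos_of_pos_on (hii1.sub hii2) _ hs₀pos
    intro u hu
    have hum : u ∈ Set.Ioc (0:ℝ) (φ₁ ξs) := ⟨hu.1, le_trans hu.2.le hs₀mem.2⟩
    have hum2 : u ∈ Set.Ioc (0:ℝ) (φ₂ ξs) := hIoc12 ▸ hum
    have hψu := hψlt u hum hu.2
    have hψ2u := hψ2nn u hum2
    have hψ1u : 0 < deriv (phiPow D.m φ₁) (invFn φ₁ ξs u) := lt_of_le_of_lt hψ2u hψu
    have hBu := hB u ⟨hu.1, hu.2.le⟩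
    have hrp : 0 ≤ D.m * u ^ (D.m - 1) :=
      mul_nonneg D.m_pos.le (Real.rpow_nonneg hu.1.le _)
    simp only [Gfun]
    nlinarith [mul_pos (sub_pos.2 hc) hψ1u, mul_pos hc₂ (sub_pos.2 hψu),
      mul_nonneg hrp (sub_nonneg.2 hBu)]
  rw [intervalIntegral.integral_sub hii1 hii2] at hpos
  linarith
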